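/- arXiv:2003.02238 — 2 statements merged into one kernel-verified Lean document; each statement's English description precedes it below -/
import Mathlib

section
/- If G is a finite directed graph with uncountably many infinite directed paths, then G contains a double loop, i.e., a directed subgraph which is the union of two directed cycles whose vertex sets C₁ and C₂ satisfy C₁ ∩ C₂ ≠ ∅ and C₁ ≠ C₂. -/
open Filter Set

/-- A directed cycle in the directed graph `(V, E)` with vertex set `C`. -/
def IsDirCycle {V : Type*} (E : V → V → Prop) (C : Set V) : Prop :=
  ∃ m : ℕ, 0 < m ∧ ∃ c : ZMod m → V, Function.Injective c ∧ Set.range c = C ∧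
    ∀ i : ZMod m, E (c i) (c (i + 1))

/-- A double loop: two directed cycles with intersecting but distinct vertex sets. -/
def HasDoubleLoop {V : Type*} (E : V → V → Prop) : Prop :=
  ∃ C₁ C₂ : Set V, IsDirCycle E C₁ ∧ IsDirCycle E C₂ ∧ (C₁ ∩ C₂).Nonempty ∧ C₁ ≠ C₂

/-- A vertex is good to the right if uncountably many infinite directed paths start at it. -/
def GoodRight {V : Type*} (E : V → V → Prop) (u : V) : Prop :=
  ¬ {p : ℕ → V | p 0 = u ∧ ∀ n, E (p n) (p (n + 1))}.Countable

/-- A vertex is good to the left if uncountably many infinite directed paths end at it. -/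
def GoodLeft {V : Type*} (E : V → V → Prop) (u : V) : Prop :=
  ¬ {p : ℕ → V | p 0 = u ∧ ∀ n, E (p (n + 1)) (p n)}.Countable

/-- Extract a simple directed cycle from a closed walk, preserving the base point
and the first edge. -/
lemma extractCycle {V : Type*} (E : V → V → Prop) :
    ∀ k : ℕ, 0 < k → ∀ w : ℕ → V, (∀ n < k, E (w n) (w (n+1))) → w k = w 0 →
    ∃ m : ℕ, 0 < m ∧ ∃ c : ZMod m → V, Function.Injective c ∧
      (∀ i, E (c i) (c (i+1))) ∧ c 0 = w 0 ∧ c 1 = w 1 := by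
  intro k
  induction k using Nat.strong_induction_on with
  | _ k ih =>
    intro hk w hE hcl
    by_cases hinj : ∀ i j, i < j → j < k → w i ≠ w j
    · -- the walk is already a simple cycle
      haveI : NeZero k := ⟨hk.ne'⟩
      refine ⟨k, hk, fun i => w i.val, ?_, ?_, ?_, ?_⟩
      · intro i j hij
        simp only at hij
        by_contra hne
        rcases lt_trichotomy i.val j.val with h' | h' | h'
        · exact hinj _ _ h' (ZMod.val_lt j) hij
        · exact hne (ZMod.val_injective k h')
        · exact hinj _ _ h' (ZMod.val_lt i) hij.symm
      · intro i
        have hv : (i + 1).val = (i.val + 1) % k := by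
          have : i + 1 = ((i.val + 1 : ℕ) : ZMod k) := by
            push_cast [ZMod.natCast_zmod_val]; ring
          rw [this, ZMod.val_natCast]
        simp only [hv]
        rcases eq_or_lt_of_le (Nat.succ_le_of_lt (ZMod.val_lt i)) with h' | h'
        · have h0 : (i.val + 1) % k = 0 := by
            rw [show i.val + 1 = k from h', Nat.mod_self]
          rw [h0, ← hcl]
          have h2 := hE i.val (ZMod.val_lt i)
          rwa [show i.val + 1 = k from h'] at h2
        · rw [Nat.mod_eq_of_lt h']
          exact hE i.val (ZMod.val_lt i)
      · simp [ZMod.val_zero]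
      · show w ((1 : ZMod k)).val = w 1
        rcases eq_or_lt_of_le (show 1 ≤ k from hk) with h1 | h1
        · have hv1 : ((1 : ZMod k)).val = 0 := by
            rw [ZMod.val_one_eq_one_mod, ← h1]
          rw [hv1, ← hcl, ← h1]
        · rw [ZMod.val_one_eq_one_mod, Nat.mod_eq_of_lt h1]
    · push_neg at hinj
      obtain ⟨i, j, hij, hjk, hw⟩ := hinj
      rcases Nat.eq_zero_or_pos i with rfl | hi
      · -- use the prefix walk of length j
        exact ih j hjk hij w (fun n hn => hE n (hn.trans hjk)) hw.symm
      · -- cut out the segment (i, j]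
        set d := j - i with hd
        set k' := k - d with hk'
        set w' : ℕ → V := fun n => if n ≤ i then w n else w (n + d) with hw'
        have hk'k : k' < k := by omega
        have hk'pos : 0 < k' := by omega
        have hE' : ∀ n < k', E (w' n) (w' (n+1)) := by
          intro n hn
          simp only [hw']
          rcases lt_trichotomy n i with h' | rfl | h'
          · rw [if_pos (by omega), if_pos (by omega)]
            exact hE n (by omega)
          · rw [if_pos le_rfl, if_neg (by omega), hw]
            have : n + 1 + d = j + 1 := by omega
            rw [this]
            exact hE j hjk
          · rw [if_neg (by omega), if_neg (by omega)]
            have : n + 1 + d = n + d + 1 := by omega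
            rw [this]
            exact hE (n + d) (by omega)
        have hcl' : w' k' = w' 0 := by
          simp only [hw']
          rw [if_neg (by omega), if_pos (by omega)]
          have : k' + d = k := by omega
          rw [this, hcl]
        obtain ⟨m, hm, c, hc⟩ := ih k' hk'k hk'pos w' hE' hcl'
        refine ⟨m, hm, c, hc.1, hc.2.1, ?_, ?_⟩
        · rw [hc.2.2.1]; simp [hw']
        · rw [hc.2.2.2]; simp only [hw']
          rw [if_pos (by omega)]

/-- With no double loop, any edge from a cycle vertex to a cycle vertex follows the cycle. -/
lemma uniqueSucc {V : Type*} {E : V → V → Prop} (hndl : ¬ HasDoubleLoop E)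
    {m : ℕ} [NeZero m] {c : ZMod m → V} (hinj : Function.Injective c)
    (hedge : ∀ i, E (c i) (c (i+1))) {s ρ : ZMod m} (he : E (c s) (c ρ)) :
    ρ = s + 1 := by
  by_contra hne
  apply hndl
  set b := s - ρ with hb
  set L := b.val + 1 with hL
  have hbm : b.val < m := ZMod.val_lt b
  have hbm' : b.val + 1 < m := by
    rcases eq_or_lt_of_le (Nat.succ_le_of_lt hbm) with h' | h'
    · exfalso; apply hne
      have h3 : b + 1 = 0 := by
        rw [← ZMod.natCast_zmod_val b, ← Nat.cast_add_one,
          show b.val + 1 = m from h', ZMod.natCast_self]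
      linear_combination hb - h3
    · exact h'
  have hLpos : 0 < L := Nat.succ_pos _
  haveI : NeZero L := ⟨hLpos.ne'⟩
  set c' : ZMod L → V := fun i => c (ρ + (i.val : ZMod m)) with hc'
  have hval : ∀ a : ℕ, a < L → ((a : ZMod L)).val = a := fun a ha =>
    ZMod.val_cast_of_lt ha
  have hinj' : Function.Injective c' := by
    intro i j hij
    simp only [hc'] at hij
    have h1 : ((i.val : ℕ) : ZMod m) = ((j.val : ℕ) : ZMod m) :=
      add_left_cancel (hinj hij)
    have h2 : i.val = j.val := by
      have hi := ZMod.val_cast_of_lt (lt_of_lt_of_le (ZMod.val_lt i) (by omega) :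
        i.val < m)
      have hj := ZMod.val_cast_of_lt (lt_of_lt_of_le (ZMod.val_lt j) (by omega) :
        j.val < m)
      rw [← hi, ← hj, h1]
    exact ZMod.val_injective L h2
  have hlast : c' ((b.val : ℕ) : ZMod L) = c s := by
    simp only [hc']
    rw [hval b.val (by omega), ZMod.natCast_zmod_val]
    congr 1; rw [hb]; ring
  have hedge' : ∀ i : ZMod L, E (c' i) (c' (i+1)) := by
    intro i
    have hiv : i.val < L := ZMod.val_lt i
    rcases eq_or_lt_of_le (Nat.succ_le_of_lt hiv) with h' | h'
    · -- wrap around : i.val = b.val, edge c s → c ρ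
      have hi : i = ((b.val : ℕ) : ZMod L) := by
        apply ZMod.val_injective
        rw [hval b.val (by omega)]; omega
      have h1 : i + 1 = 0 := by
        rw [hi, ← Nat.cast_add_one, show b.val + 1 = L from rfl, ZMod.natCast_self]
      rw [h1, hi, hlast]
      show E (c s) (c (ρ + ((0 : ZMod L).val : ZMod m)))
      rw [ZMod.val_zero]
      simpa using he
    · have h1 : (i + 1).val = i.val + 1 := by
        have : i + 1 = ((i.val + 1 : ℕ) : ZMod L) := by
          push_cast [ZMod.natCast_zmod_val]; ring
        rw [this, hval _ h']
      show E (c (ρ + (i.val : ZMod m))) (c (ρ + ((i+1).val : ZMod m)))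
      rw [h1]
      push_cast
      rw [← add_assoc]
      exact hedge _
  have hsmem : c s ∈ Set.range c ∩ Set.range c' :=
    ⟨⟨s, rfl⟩, ⟨_, hlast⟩⟩
  have hnotmem : c (s + 1) ∉ Set.range c' := by
    rintro ⟨j, hj⟩
    simp only [hc'] at hj
    have h1 : ρ + ((j.val : ℕ) : ZMod m) = s + 1 := hinj hj
    have hjv : j.val < L := ZMod.val_lt j
    have h2 : ((j.val : ℕ) : ZMod m) = b + 1 := by
      linear_combination h1 - hb
    have h3 : (b + 1) = ((b.val + 1 : ℕ) : ZMod m) := by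
      push_cast [ZMod.natCast_zmod_val]; ring
    rw [h3] at h2
    have h4 : j.val = b.val + 1 := by
      have h5 := ZMod.val_cast_of_lt (lt_of_lt_of_le hjv (by omega) : j.val < m)
      have h6 := ZMod.val_cast_of_lt hbm'
      rw [← h5, h2, h6]
    omega
  refine ⟨Set.range c, Set.range c', ⟨m, Nat.pos_of_ne_zero (NeZero.ne m), c, hinj, rfl, hedge⟩,
    ⟨L, hLpos, c', hinj', rfl, hedge'⟩, ⟨c s, hsmem⟩, ?_⟩
  intro hEq
  exact hnotmem (hEq ▸ ⟨s + 1, rfl⟩)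

/-- With no double loop, an infinite path starting on a cycle and returning to its
base infinitely often must follow the cycle forever. -/
lemma follow {V : Type*} {E : V → V → Prop} (hndl : ¬ HasDoubleLoop E)
    {m : ℕ} (hm : 0 < m) (c : ZMod m → V) (hinj : Function.Injective c)
    (hedge : ∀ i, E (c i) (c (i+1))) (w : ℕ → V) (hw : ∀ n, E (w n) (w (n+1)))
    (h0 : w 0 = c 0) (hrec : ∀ N, ∃ n, N ≤ n ∧ w n = c 0) :
    ∀ t : ℕ, w t = c (t : ZMod m) := by
  haveI : NeZero m := ⟨hm.ne'⟩
  intro t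
  induction t with
  | zero => simpa using h0
  | succ t iht =>
    have he : E (c (t : ZMod m)) (w (t+1)) := iht ▸ hw t
    by_cases hin : w (t+1) ∈ Set.range c
    · obtain ⟨ρ, hρ⟩ := hin
      have hs := uniqueSucc hndl hinj hedge (hρ ▸ he)
      rw [← hρ, hs]
      push_cast
      ring_nf
    · exfalso
      obtain ⟨n, hn, hwn⟩ := hrec (t+1)
      set r := t % m + m with hr
      have hrm : ((r : ℕ) : ZMod m) = (t : ZMod m) := by
        rw [hr]
        push_cast
        rw [ZMod.natCast_self, add_zero, ZMod.natCast_mod]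
      set L := (n - t) + r with hLdef
      set u : ℕ → V := fun x => if x ≤ n - t then w (t + x) else c ((x - (n - t) : ℕ) : ZMod m)
        with hu
      have hLpos : 0 < L := by omega
      have hu0 : u 0 = c (t : ZMod m) := by
        simp only [hu]
        rw [if_pos (by omega)]
        simpa using iht
      have huL : u L = c (t : ZMod m) := by
        simp only [hu]
        rw [if_neg (by omega), show L - (n - t) = r by omega, hrm]
      have hu1 : u 1 = w (t+1) := by
        simp only [hu]
        rw [if_pos (by omega)]
      have hedgeu : ∀ x < L, E (u x) (u (x+1)) := by
        intro x hx
        simp only [hu]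
        rcases lt_trichotomy x (n - t) with h' | h' | h'
        · rw [if_pos (by omega)]
          rcases eq_or_lt_of_le (Nat.succ_le_of_lt h') with h'' | h''
          · -- x + 1 = n - t : next vertex is w n = c 0, but stays in w branch
            rw [if_pos (by omega), show t + (x+1) = t + x + 1 by omega]
            exact hw (t + x)
          · rw [if_pos (by omega), show t + (x+1) = t + x + 1 by omega]
            exact hw (t + x)
        · -- x = n - t : from w n = c 0 to c 1
          rw [if_pos (by omega), if_neg (by omega),
            show t + x = n by omega, hwn,
            show x + 1 - (n - t) = 1 by omega]
          have := hedge 0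
          simpa using this
        · rw [if_neg (by omega), if_neg (by omega),
            show x + 1 - (n - t) = (x - (n - t)) + 1 by omega]
          push_cast
          exact hedge _
      obtain ⟨m₂, hm₂, c₂, hinj₂, hedge₂, hc₂0, hc₂1⟩ :=
        extractCycle E L hLpos u hedgeu (huL.trans hu0.symm)
      apply hndl
      refine ⟨Set.range c, Set.range c₂,
        ⟨m, hm, c, hinj, rfl, hedge⟩, ⟨m₂, hm₂, c₂, hinj₂, rfl, hedge₂⟩,
        ⟨c (t : ZMod m), ⟨t, rfl⟩, ⟨0, hc₂0.trans hu0⟩⟩, ?_⟩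
      intro hEq
      apply hin
      rw [← hu1, ← hc₂1, hEq]
      exact ⟨1, rfl⟩

lemma evPerCountable {V : Type*} [Countable V] :
    {p : ℕ → V | ∃ N m : ℕ, 0 < m ∧ ∀ t, p (N + t + m) = p (N + t)}.Countable := by
  have : {p : ℕ → V | ∃ N m : ℕ, 0 < m ∧ ∀ t, p (N + t + m) = p (N + t)} =
      ⋃ (N : ℕ) (m : ℕ), {p : ℕ → V | 0 < m ∧ ∀ t, p (N + t + m) = p (N + t)} := by
    ext p
    simp [Set.mem_iUnion]
  rw [this]
  refine Set.countable_iUnion fun N => Set.countable_iUnion fun m => ?_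
  set S := {p : ℕ → V | 0 < m ∧ ∀ t, p (N + t + m) = p (N + t)} with hS
  set f : (ℕ → V) → (Fin (N + m) → V) := fun p i => p i.val with hf
  apply Set.countable_of_injective_of_countable_image (f := f)
  · intro p hp q hq hpq
    obtain ⟨hm, hp'⟩ := hp
    obtain ⟨_, hq'⟩ := hq
    funext n
    induction n using Nat.strong_induction_on with
    | _ n ih =>
      rcases lt_or_ge n (N + m) with h' | h'
      · exact congrFun hpq ⟨n, h'⟩
      · have h1 : n = N + (n - N - m) + m := by omega
        rw [h1, hp' (n - N - m), hq' (n - N - m)]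
        exact ih (N + (n - N - m)) (by omega)
  · exact (f '' S).to_countable

theorem stmt12 (V : Type*) [Fintype V] (E : V → V → Prop)
    (h : ¬ {p : ℕ → V | ∀ n, E (p n) (p (n + 1))}.Countable) :
    HasDoubleLoop E := by
  by_contra hndl
  apply h
  refine Set.Countable.mono ?_ evPerCountable
  intro p hp
  simp only [Set.mem_setOf_eq] at hp ⊢
  -- find a vertex visited infinitely often
  obtain ⟨v, hv⟩ := Finite.exists_infinite_fiber p
  have hvinf : (p ⁻¹' {v}).Infinite := Set.infinite_coe_iff.mp hv
  obtain ⟨n₀, hn₀⟩ : ∃ n₀, p n₀ = v := by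
    obtain ⟨n₀, hmem, -⟩ := hvinf.exists_gt 0
    exact ⟨n₀, hmem⟩
  set w : ℕ → V := fun s => p (n₀ + s) with hwdef
  have hw : ∀ s, E (w s) (w (s+1)) := by
    intro s
    simp only [hwdef, show n₀ + (s + 1) = n₀ + s + 1 by omega]
    exact hp (n₀ + s)
  -- extract a cycle through v
  obtain ⟨n₁, hmem₁, hgt₁⟩ := hvinf.exists_gt n₀
  have hcl : w (n₁ - n₀) = w 0 := by
    simp only [hwdef]
    rw [show n₀ + (n₁ - n₀) = n₁ by omega, add_zero, hn₀, hmem₁]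
  obtain ⟨m, hm, c, hinj, hedge, hc0, -⟩ :=
    extractCycle E (n₁ - n₀) (by omega) w (fun x _ => hw x) hcl
  have hrec : ∀ N, ∃ n, N ≤ n ∧ w n = c 0 := by
    intro N
    obtain ⟨n', hmem', hgt'⟩ := hvinf.exists_gt (n₀ + N)
    refine ⟨n' - n₀, by omega, ?_⟩
    simp only [hwdef]
    rw [show n₀ + (n' - n₀) = n' by omega, hc0]
    simp only [hwdef, add_zero, hn₀]
    exact hmem'
  have hfol := follow hndl hm c hinj hedge w hw hc0.symm hrec
  refine ⟨n₀, m, hm, fun t => ?_⟩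
  have h1 : p (n₀ + t + m) = w (t + m) := by
    simp only [hwdef]; ring_nf
  have h2 : p (n₀ + t) = w t := rfl
  rw [h1, h2, hfol, hfol]
  push_cast
  haveI : NeZero m := ⟨hm.ne'⟩
  rw [ZMod.natCast_self, add_zero]
end

section
/- Every vertex of a double loop in a finite directed graph is good to the right and good to the left. -/
open Filter Set

open Classical in
lemma not_countable_bool_seq : ¬ Countable (ℕ → Bool) := by
  intro h
  obtain ⟨e, he⟩ := Countable.exists_injective_nat (ℕ → Bool)
  refine Function.cantor_injective (fun s => e (fun n => decide (n ∈ s))) ?_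
  intro s t hst
  have h2 := he hst
  ext n
  have := congrFun h2 n
  simpa using this

/-- In a cycle one can walk from any vertex to any other. -/
lemma cycle_walk {V : Type*} {E : V → V → Prop} {C : Set V} (h : IsDirCycle E C)
    {u v : V} (hu : u ∈ C) (hv : v ∈ C) :
    ∃ (L : ℕ) (q : ℕ → V), q 0 = u ∧ q L = v ∧ ∀ n, E (q n) (q (n + 1)) := by
  obtain ⟨m, hm, c, hinj, hrange, hedge⟩ := h
  haveI : NeZero m := ⟨hm.ne'⟩
  rw [← hrange] at hu hv
  obtain ⟨i, rfl⟩ := hu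
  obtain ⟨j, rfl⟩ := hv
  refine ⟨(j - i).val, fun n => c (i + (n : ZMod m)), by simp, ?_, fun n => ?_⟩
  · show c (i + (((j - i).val : ℕ) : ZMod m)) = c j
    congr 1
    rw [show (((j - i).val : ℕ) : ZMod m) = j - i from
      (ZMod.natCast_val _).trans (ZMod.cast_id _ _)]
    ring
  · show E (c (i + (n : ZMod m))) (c (i + ((n + 1 : ℕ) : ZMod m)))
    have h1 : ((n + 1 : ℕ) : ZMod m) = (n : ZMod m) + 1 := by push_cast; ring
    rw [h1, ← add_assoc]
    exact hedge _

/-- Prepending a finite walk preserves goodness-to-the-right. -/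
lemma goodRight_of_walk {V : Type*} {E : V → V → Prop} {u v : V}
    (L : ℕ) (q : ℕ → V) (h0 : q 0 = u) (hL : q L = v)
    (hq : ∀ n, E (q n) (q (n + 1))) (hv : GoodRight E v) : GoodRight E u := by
  intro hcount
  apply hv
  set Φ : (ℕ → V) → (ℕ → V) := fun p n => if n < L then q n else p (n - L) with hΦ
  have hinj : Function.Injective Φ := by
    intro p p' hpp
    funext k
    have := congrFun hpp (k + L)
    simpa [hΦ, Nat.add_sub_cancel] using this
  have hsub : {p : ℕ → V | p 0 = v ∧ ∀ n, E (p n) (p (n + 1))} ⊆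
      Φ ⁻¹' {p : ℕ → V | p 0 = u ∧ ∀ n, E (p n) (p (n + 1))} := by
    rintro p ⟨hp0, hpe⟩
    constructor
    · by_cases hL0 : 0 < L
      · simp [hΦ, hL0, h0]
      · have : L = 0 := by omega
        subst this
        simp only [hΦ]
        rw [if_neg (by omega)]
        simp [hp0, ← hL, h0]
    · intro n
      by_cases h1 : n + 1 < L
      · have h2 : n < L := by omega
        simp only [hΦ]
        rw [if_pos h2, if_pos h1]
        exact hq n
      · by_cases h2 : n < L
        · have h3 : n + 1 = L := by omega
          have h4 := hq n
          simp only [hΦ]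
          rw [if_pos h2, if_neg (by omega)]
          have : p (n + 1 - L) = q (n + 1) := by
            rw [h3, Nat.sub_self, hp0, ← hL]
          rw [this]
          exact h4
        · simp only [hΦ]
          rw [if_neg h2, if_neg (by omega)]
          have h3 : n + 1 - L = (n - L) + 1 := by omega
          rw [h3]
          exact hpe (n - L)
  exact (hcount.preimage hinj).mono hsub

lemma goodRight_main {V : Type*} (E : V → V → Prop) (C₁ C₂ : Set V)
    (h₁ : IsDirCycle E C₁) (h₂ : IsDirCycle E C₂)
    (hmeet : (C₁ ∩ C₂).Nonempty) (hne : C₁ ≠ C₂) :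
    ∀ u ∈ C₁ ∪ C₂, GoodRight E u := by
  obtain ⟨v, hv₁, hv₂⟩ := hmeet
  have hgv : GoodRight E v := by
    obtain ⟨m₁, hm₁, c₁, hinj₁, hrange₁, hedge₁⟩ := h₁
    obtain ⟨m₂, hm₂, c₂, hinj₂, hrange₂, hedge₂⟩ := h₂
    haveI : NeZero m₁ := ⟨hm₁.ne'⟩
    haveI : NeZero m₂ := ⟨hm₂.ne'⟩
    obtain ⟨i₁, hi₁⟩ : v ∈ Set.range c₁ := hrange₁ ▸ hv₁
    obtain ⟨i₂, hi₂⟩ : v ∈ Set.range c₂ := hrange₂ ▸ hv₂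
    set M := m₁ * m₂ with hM
    have hMpos : 0 < M := Nat.mul_pos hm₁ hm₂
    have hM₁ : ((M : ℕ) : ZMod m₁) = 0 := by simp [hM]
    have hM₂ : ((M : ℕ) : ZMod m₂) = 0 := by simp [hM]
    set P : (ℕ → Bool) → ℕ → V := fun s n =>
      if s (n / M) then c₁ (i₁ + ((n % M : ℕ) : ZMod m₁))
      else c₂ (i₂ + ((n % M : ℕ) : ZMod m₂)) with hP
    have key : ∀ (s : ℕ → Bool) (n : ℕ),
        P s (n + 1) = (if s (n / M) then c₁ (i₁ + ((n % M : ℕ) : ZMod m₁) + 1)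
          else c₂ (i₂ + ((n % M : ℕ) : ZMod m₂) + 1)) := by
      intro s n
      have hn : n + 1 = M * (n / M) + (n % M + 1) := by
        have := Nat.div_add_mod n M; omega
      by_cases hr : n % M + 1 < M
      · have hdiv : (n + 1) / M = n / M := by
          rw [hn, Nat.mul_add_div hMpos, Nat.div_eq_of_lt hr, add_zero]
        have hmod : (n + 1) % M = n % M + 1 := by
          rw [hn, Nat.mul_add_mod, Nat.mod_eq_of_lt hr]
        simp only [hP, hdiv, hmod, Nat.cast_add, Nat.cast_one, ← add_assoc]
      · have hr' : n % M + 1 = M := by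
          have := Nat.mod_lt n hMpos; omega
        have hn' : n + 1 = M * (n / M + 1) := by rw [hn, hr']; ring
        have hdiv : (n + 1) / M = n / M + 1 := by
          rw [hn', Nat.mul_div_cancel_left _ hMpos]
        have hmod : (n + 1) % M = 0 := by
          rw [hn', Nat.mul_mod_right]
        have e₁ : c₁ (i₁ + ((n % M : ℕ) : ZMod m₁) + 1) = v := by
          have h5 : ((M : ℕ) : ZMod m₁) = ((n % M : ℕ) : ZMod m₁) + 1 := by
            conv_lhs => rw [← hr']
            push_cast; ring
          rw [add_assoc, ← h5, hM₁, add_zero, hi₁]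
        have e₂ : c₂ (i₂ + ((n % M : ℕ) : ZMod m₂) + 1) = v := by
          have h5 : ((M : ℕ) : ZMod m₂) = ((n % M : ℕ) : ZMod m₂) + 1 := by
            conv_lhs => rw [← hr']
            push_cast; ring
          rw [add_assoc, ← h5, hM₂, add_zero, hi₂]
        simp only [hP, hdiv, hmod, Nat.cast_zero, add_zero, e₁, e₂, hi₁, hi₂]
        split <;> split <;> simp
    have hmem : ∀ s, P s ∈ {p : ℕ → V | p 0 = v ∧ ∀ n, E (p n) (p (n + 1))} := by
      intro s
      constructor
      · simp only [hP, Nat.zero_div, Nat.zero_mod, Nat.cast_zero, add_zero]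
        split
        · exact hi₁
        · exact hi₂
      · intro n
        rw [key s n]
        simp only [hP]
        split
        · exact hedge₁ _
        · exact hedge₂ _
    have hPinj : Function.Injective P := by
      have main : ∀ (s t : ℕ → Bool) (k : ℕ), P s = P t → s k = true → t k = false → False := by
        intro s t k hst hsk htk
        have heq : ∀ r : ℕ, r < M →
            c₁ (i₁ + ((r : ℕ) : ZMod m₁)) = c₂ (i₂ + ((r : ℕ) : ZMod m₂)) := by
          intro r hr
          have h1 := congrFun hst (k * M + r)
          have hdiv : (k * M + r) / M = k := by
            rw [mul_comm, Nat.mul_add_div hMpos, Nat.div_eq_of_lt hr, add_zero]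
          have hmod : (k * M + r) % M = r := by
            rw [mul_comm, Nat.mul_add_mod, Nat.mod_eq_of_lt hr]
          simp only [hP, hdiv, hmod, hsk, htk] at h1
          simpa using h1
        apply hne
        ext x
        constructor
        · intro hx
          obtain ⟨j, rfl⟩ : x ∈ Set.range c₁ := hrange₁ ▸ hx
          have hr : (j - i₁).val < M := lt_of_lt_of_le (ZMod.val_lt _) (Nat.le_mul_of_pos_right _ hm₂)
          have h6 : c₁ (i₁ + (((j - i₁).val : ℕ) : ZMod m₁)) = c₁ j := by
            congr 1
            rw [show ((((j - i₁).val : ℕ)) : ZMod m₁) = j - i₁ from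
              (ZMod.natCast_val _).trans (ZMod.cast_id _ _)]
            ring
          rw [← h6, heq _ hr, ← hrange₂]
          exact ⟨_, rfl⟩
        · intro hx
          obtain ⟨j, rfl⟩ : x ∈ Set.range c₂ := hrange₂ ▸ hx
          have hr : (j - i₂).val < M := lt_of_lt_of_le (ZMod.val_lt _) (Nat.le_mul_of_pos_left _ hm₁)
          have h6 : c₂ (i₂ + (((j - i₂).val : ℕ) : ZMod m₂)) = c₂ j := by
            congr 1
            rw [show ((((j - i₂).val : ℕ)) : ZMod m₂) = j - i₂ from
              (ZMod.natCast_val _).trans (ZMod.cast_id _ _)]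
            ring
          rw [← h6, ← heq _ hr, ← hrange₁]
          exact ⟨_, rfl⟩
      intro s t hst
      by_contra hne'
      obtain ⟨k, hk⟩ : ∃ k, s k ≠ t k := by
        by_contra hc; push_neg at hc; exact hne' (funext hc)
      cases hs : s k with
      | true =>
        cases ht : t k with
        | true => rw [hs, ht] at hk; exact hk rfl
        | false => exact main s t k hst hs ht
      | false =>
        cases ht : t k with
        | true => exact main t s k hst.symm ht hs
        | false => rw [hs, ht] at hk; exact hk rfl
    intro hcount
    have huniv : (Set.univ : Set (ℕ → Bool)).Countable := by
      refine (hcount.preimage hPinj).mono ?_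
      intro s _
      exact hmem s
    exact not_countable_bool_seq (Set.countable_univ_iff.mp huniv)
  intro u hu
  rcases hu with hu | hu
  · obtain ⟨L, q, h0, hL, hq⟩ := cycle_walk h₁ hu hv₁
    exact goodRight_of_walk L q h0 hL hq hgv
  · obtain ⟨L, q, h0, hL, hq⟩ := cycle_walk h₂ hu hv₂
    exact goodRight_of_walk L q h0 hL hq hgv

lemma isDirCycle_flip {V : Type*} {E : V → V → Prop} {C : Set V}
    (h : IsDirCycle E C) : IsDirCycle (Function.swap E) C := by
  obtain ⟨m, hm, c, hinj, hrange, hedge⟩ := h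
  refine ⟨m, hm, fun i => c (-i), hinj.comp neg_injective, ?_, fun i => ?_⟩
  · rw [← hrange]
    ext x
    constructor
    · rintro ⟨i, rfl⟩; exact ⟨-i, rfl⟩
    · rintro ⟨i, rfl⟩; exact ⟨-i, by simp⟩
  · show E (c (-(i + 1))) (c (-i))
    have h1 := hedge (-(i + 1))
    rwa [show -(i + 1) + 1 = -i by ring] at h1

theorem stmt14 (V : Type*) [Fintype V] (E : V → V → Prop) (C₁ C₂ : Set V)
    (h₁ : IsDirCycle E C₁) (h₂ : IsDirCycle E C₂)
    (hmeet : (C₁ ∩ C₂).Nonempty) (hne : C₁ ≠ C₂) :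
    ∀ u ∈ C₁ ∪ C₂, GoodRight E u ∧ GoodLeft E u := by
  intro u hu
  refine ⟨goodRight_main E C₁ C₂ h₁ h₂ hmeet hne u hu, ?_⟩
  exact goodRight_main (Function.swap E) C₁ C₂ (isDirCycle_flip h₁) (isDirCycle_flip h₂)
    hmeet hne u hu
end
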